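/- Let η_1, …, η_N > 0 and H := ∑_{i=1}^N η_i. Suppose x_i, d_i : [0, ∞) → ℝ are differentiable functions satisfying, for all t ≥ 0 and all i ∈ {1,…,N}, the quantity adjustment process dx_i/dt = η_i·( d_i(t) − ∑_{j≠i} x_j(t) ) and dd_i/dt = −dx_i/dt, together with the initial optimality conditions x_i(0) + d_i(0) = x̂_β for all i. Then, writing X(t) := ∑_{i=1}^N x_i(t), one has X(t) = x̂_β + (X(0) − x̂_β)·e^{−H·t} for all t ≥ 0; in particular, the total production ∑_{i=1}^N x_i(t) converges to x̂_β as t → ∞. -/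

import Mathlib

open Filter Finset

/-- The benefit function `f` with its first and second derivatives, together with
the maximizer map `α ↦ x̂_α` (the unique `x ≥ 0` with `f'(x̂_α) = α` for `α ∈ (0, f'(0)]`). -/
structure BenefitFun where
  f : ℝ → ℝ
  f' : ℝ → ℝ
  f'' : ℝ → ℝ
  xhat : ℝ → ℝ
  f_zero : f 0 = 0
  f_nonneg : ∀ x : ℝ, 0 ≤ x → 0 ≤ f x
  hasDeriv : ∀ x ∈ Set.Ici (0:ℝ), HasDerivWithinAt f (f' x) (Set.Ici 0) x
  hasDeriv' : ∀ x ∈ Set.Ici (0:ℝ), HasDerivWithinAt f' (f'' x) (Set.Ici 0) x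
  cont_f'' : ContinuousOn f'' (Set.Ici 0)
  f'_pos : ∀ x : ℝ, 0 < x → 0 < f' x
  f''_neg : ∀ x : ℝ, 0 < x → f'' x < 0
  f'_tendsto : Filter.Tendsto f' Filter.atTop (nhds 0)
  xhat_nonneg : ∀ α : ℝ, 0 < α → α ≤ f' 0 → 0 ≤ xhat α
  xhat_spec : ∀ α : ℝ, 0 < α → α ≤ f' 0 → f' (xhat α) = α
  xhat_unique : ∀ α : ℝ, 0 < α → α ≤ f' 0 → ∀ x : ℝ, 0 ≤ x → f' x = α → x = xhat α
  xhat_max : ∀ α : ℝ, 0 < α → α ≤ f' 0 → ∀ x : ℝ, 0 ≤ x → f x - α * x ≤ f (xhat α) - α * xhat α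

/-- `f*(α) = f(x̂_α) − α·x̂_α = sup_{x ≥ 0} (f(x) − α x)`. -/
noncomputable def BenefitFun.fstar (B : BenefitFun) (α : ℝ) : ℝ :=
  B.f (B.xhat α) - α * B.xhat α

/-- `β̃(n) = (1/n)·κ + ((n−1)/n)·(δ+σ)`. -/
noncomputable def btilde (κ δ σ : ℝ) (n : ℕ) : ℝ :=
  (1 / (n:ℝ)) * κ + (((n:ℝ) - 1) / (n:ℝ)) * (δ + σ)

lemma const_on_Ici_aux (f : ℝ → ℝ)
    (hf : ∀ t ∈ Set.Ici (0:ℝ), HasDerivWithinAt f 0 (Set.Ici (0:ℝ)) t) :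
    ∀ t : ℝ, 0 ≤ t → f t = f 0 := by
  intro t ht
  have := constant_of_has_deriv_right_zero (f := f) (a := 0) (b := t)
    (fun s hs => ((hf s hs.1).continuousWithinAt).mono (fun y hy => hy.1))
    (fun s hs => (hf s (Set.mem_Ici.mpr hs.1)).mono (Set.Ici_subset_Ici.mpr hs.1))
  exact this t ⟨ht, le_refl t⟩

theorem stmt19 (B : BenefitFun) (N : ℕ) (hN : 2 ≤ N)
    (κ δ σ : ℝ) (hκ : 0 < κ) (hδ : 0 < δ) (hσ : 0 < σ)
    (hcost : δ + σ < κ) (hκf : κ < B.f' 0)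
    (β : ℝ) (hβ : β = (1 / (N:ℝ)) * κ + (((N:ℝ) - 1) / (N:ℝ)) * (δ + σ))
    (η : Fin N → ℝ) (hη : ∀ i, 0 < η i) (H : ℝ) (hH : H = ∑ i, η i)
    (x d : Fin N → ℝ → ℝ)
    (hdx : ∀ t : ℝ, 0 ≤ t → ∀ i : Fin N,
      HasDerivWithinAt (x i) (η i * (d i t - ∑ j ∈ Finset.univ.erase i, x j t))
        (Set.Ici 0) t)
    (hdd : ∀ t : ℝ, 0 ≤ t → ∀ i : Fin N,
      HasDerivWithinAt (d i) (-(η i * (d i t - ∑ j ∈ Finset.univ.erase i, x j t)))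
        (Set.Ici 0) t)
    (hinit : ∀ i, x i 0 + d i 0 = B.xhat β) :
    (∀ t : ℝ, 0 ≤ t →
      (∑ i, x i t) = B.xhat β + ((∑ i, x i 0) - B.xhat β) * Real.exp (-H * t))
    ∧ Filter.Tendsto (fun t => ∑ i, x i t) Filter.atTop (nhds (B.xhat β)) := by

  haveI : NeZero N := ⟨by omega⟩
  set M := B.xhat β with hM
  have hsum : ∀ i : Fin N, ∀ t : ℝ, 0 ≤ t → x i t + d i t = M := by
    intro i t ht
    have h0 : ∀ s ∈ Set.Ici (0:ℝ),
        HasDerivWithinAt (fun u => x i u + d i u) 0 (Set.Ici 0) s := by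
      intro s hs
      have := (hdx s hs i).fun_add (hdd s hs i)
      simpa using this
    have := const_on_Ici_aux _ h0 t ht
    simpa [hinit i] using this
  have hH0 : 0 < H := by
    rw [hH]
    exact Finset.sum_pos (fun i _ => hη i) Finset.univ_nonempty
  have hc : ∀ t : ℝ, 0 ≤ t →
      HasDerivWithinAt (fun u => ∑ i, x i u) (H * (M - ∑ i, x i t)) (Set.Ici 0) t := by
    intro t ht
    have h1 : HasDerivWithinAt (fun u => ∑ i, x i u)
        (∑ i, η i * (d i t - ∑ j ∈ Finset.univ.erase i, x j t)) (Set.Ici 0) t :=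
      HasDerivWithinAt.fun_sum (fun i _ => hdx t ht i)
    convert h1 using 1
    rw [hH, Finset.sum_mul]
    refine Finset.sum_congr rfl (fun i _ => ?_)
    have hd : d i t = M - x i t := by have := hsum i t ht; linarith
    have he : ∑ j ∈ Finset.univ.erase i, x j t = (∑ j, x j t) - x i t :=
      Finset.sum_erase_eq_sub (Finset.mem_univ i)
    rw [hd, he]; ring
  have key : ∀ t : ℝ, 0 ≤ t →
      ((∑ i, x i t) - M) * Real.exp (H * t) = (∑ i, x i 0) - M := by
    have h0 : ∀ t ∈ Set.Ici (0:ℝ),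
        HasDerivWithinAt (fun u => ((∑ i, x i u) - M) * Real.exp (H * u)) 0 (Set.Ici 0) t := by
      intro t ht
      have hg : HasDerivWithinAt (fun u => (∑ i, x i u) - M)
          (H * (M - ∑ i, x i t)) (Set.Ici 0) t := (hc t ht).sub_const M
      have he : HasDerivAt (fun u => Real.exp (H * u)) (H * Real.exp (H * t)) t := by
        have := (Real.hasDerivAt_exp (H * t)).comp t ((hasDerivAt_id t).const_mul H)
        simpa [mul_comm, Function.comp_def] using this
      have := hg.fun_mul he.hasDerivWithinAt
      exact this.congr_deriv (by ring)
    intro t ht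
    have := const_on_Ici_aux _ h0 t ht
    simpa using this
  have closed : ∀ t : ℝ, 0 ≤ t →
      (∑ i, x i t) = M + ((∑ i, x i 0) - M) * Real.exp (-H * t) := by
    intro t ht
    have hk := key t ht
    have hexp : Real.exp (H * t) ≠ 0 := Real.exp_ne_zero _
    have h2 : (∑ i, x i t) - M = ((∑ i, x i 0) - M) * Real.exp (-H * t) := by
      rw [neg_mul, Real.exp_neg]
      field_simp
      linarith [hk]
    linarith [h2]
  refine ⟨closed, ?_⟩
  have hexp : Tendsto (fun t : ℝ => Real.exp (-H * t)) atTop (nhds 0) := by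
    apply Real.tendsto_exp_atBot.comp
    exact tendsto_id.const_mul_atTop_of_neg (by linarith)
  have h1 : Tendsto (fun t : ℝ => M + ((∑ i, x i 0) - M) * Real.exp (-H * t)) atTop
      (nhds (M + ((∑ i, x i 0) - M) * 0)) :=
    tendsto_const_nhds.add (tendsto_const_nhds.mul hexp)
  rw [mul_zero, add_zero] at h1
  apply h1.congr'
  filter_upwards [eventually_ge_atTop (0:ℝ)] with t ht
  exact (closed t ht).symm
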